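/- The pure virtual twin group PVT_3 is isomorphic to the free group F_3 of rank 3. -/

import Mathlib

namespace VTG

open scoped commutatorElement

abbrev Gen (n : ℕ) := Fin (n-1) ⊕ Fin (n-1)

/-- The free-group letter corresponding to the generator `s_i`. -/
def fs {n : ℕ} (i : Fin (n-1)) : FreeGroup (Gen n) := FreeGroup.of (Sum.inl i)

/-- The free-group letter corresponding to the generator `ρ_i`. -/
def fr {n : ℕ} (i : Fin (n-1)) : FreeGroup (Gen n) := FreeGroup.of (Sum.inr i)

/-- The defining relations of the virtual twin group `VT_n`. -/
def vtRels (n : ℕ) : Set (FreeGroup (Gen n)) :=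
  { w | (∃ i : Fin (n-1), w = fs i * fs i) ∨
        (∃ i j : Fin (n-1), (i : ℕ) + 2 ≤ (j : ℕ) ∧ w = ⁅fs i, fs j⁆) ∨
        (∃ i : Fin (n-1), w = fr i * fr i) ∨
        (∃ i j : Fin (n-1), (i : ℕ) + 2 ≤ (j : ℕ) ∧ w = ⁅fr i, fr j⁆) ∨
        (∃ i j : Fin (n-1), (j : ℕ) = (i : ℕ) + 1 ∧
          w = fr i * fr j * fr i * (fr j * fr i * fr j)⁻¹) ∨
        (∃ i j : Fin (n-1), (i : ℕ) + 2 ≤ (j : ℕ) ∧ (w = ⁅fr i, fs j⁆ ∨ w = ⁅fs i, fr j⁆)) ∨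
        (∃ i j : Fin (n-1), (j : ℕ) = (i : ℕ) + 1 ∧
          w = fr i * fr j * fs i * (fs j * fr i * fr j)⁻¹) }

/-- The virtual twin group `VT_n`. -/
abbrev VT (n : ℕ) := PresentedGroup (vtRels n)

/-- The generator `s_{k+1}` (1-based numbering) of `VT_n`. -/
def sg {n : ℕ} (k : ℕ) (h : k < n - 1) : VT n := PresentedGroup.of (Sum.inl ⟨k, h⟩)

/-- The generator `ρ_{k+1}` (1-based numbering) of `VT_n`. -/
def rg {n : ℕ} (k : ℕ) (h : k < n - 1) : VT n := PresentedGroup.of (Sum.inr ⟨k, h⟩)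

/-- The transposition `(i, i+1)` in the symmetric group on `n` letters. -/
def tr {n : ℕ} (i : Fin (n - 1)) : Equiv.Perm (Fin n) :=
  Equiv.swap ⟨i.1, by have := i.2; omega⟩ ⟨i.1 + 1, by have := i.2; omega⟩

lemma swap_commute {α : Type*} [DecidableEq α] {a b c d : α}
    (h1 : a ≠ c) (h2 : a ≠ d) (h3 : b ≠ c) (h4 : b ≠ d) :
    Commute (Equiv.swap a b) (Equiv.swap c d) := by
  apply Equiv.Perm.Disjoint.commute
  intro x
  by_cases hxa : x = a
  · subst hxa; right; exact Equiv.swap_apply_of_ne_of_ne h1 h2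
  · by_cases hxb : x = b
    · subst hxb; right; exact Equiv.swap_apply_of_ne_of_ne h3 h4
    · left; exact Equiv.swap_apply_of_ne_of_ne hxa hxb

lemma tr_commute {n : ℕ} {i j : Fin (n-1)} (h : (i : ℕ) + 2 ≤ (j : ℕ)) :
    Commute (tr (n := n) i) (tr j) := by
  apply swap_commute <;>
    (intro hEq; apply_fun Fin.val at hEq; simp only [] at hEq; omega)

lemma tr_braid {n : ℕ} {i j : Fin (n-1)} (h : (j : ℕ) = (i : ℕ) + 1) :
    tr (n := n) i * tr j * tr i = tr j * tr i * tr j := by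
  have hj2 : (i : ℕ) + 2 ≤ n := by have := j.2; omega
  set a : Fin n := ⟨i.1, by omega⟩ with ha
  set b : Fin n := ⟨i.1 + 1, by omega⟩ with hb
  set c : Fin n := ⟨i.1 + 2, by omega⟩ with hc
  have hab : a ≠ b := by simp [ha, hb, Fin.ext_iff]
  have hbc : b ≠ c := by simp [hb, hc, Fin.ext_iff]
  have hac : a ≠ c := by simp [ha, hc, Fin.ext_iff]
  have h1 : tr (n := n) i = Equiv.swap a b := rfl
  have h2 : tr (n := n) j = Equiv.swap b c := by
    unfold tr
    congr 1 <;> exact Fin.ext (by simp [hb, hc, h])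
  rw [h1, h2]
  have L := Equiv.swap_mul_swap_mul_swap (x := c) (y := b) (z := a)
    (hbc.symm) (hac.symm)
  have R := Equiv.swap_mul_swap_mul_swap (x := a) (y := b) (z := c)
    (hab) (hac)
  calc Equiv.swap a b * Equiv.swap b c * Equiv.swap a b
      = Equiv.swap b a * Equiv.swap c b * Equiv.swap b a := by
        rw [Equiv.swap_comm a b, Equiv.swap_comm b c]
    _ = Equiv.swap a c := L
    _ = Equiv.swap c a := Equiv.swap_comm a c
    _ = Equiv.swap b c * Equiv.swap a b * Equiv.swap b c := R.symm

lemma tr_sq {n : ℕ} (i : Fin (n-1)) : tr (n := n) i * tr i = 1 := Equiv.swap_mul_self _ _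

/-- The canonical projection `π : VT_n → S_n`. -/
def perm (n : ℕ) : VT n →* Equiv.Perm (Fin n) :=
  PresentedGroup.toGroup (f := Sum.elim tr tr) (by
    rintro w (⟨i, rfl⟩ | ⟨i, j, hij, rfl⟩ | ⟨i, rfl⟩ | ⟨i, j, hij, rfl⟩ |
      ⟨i, j, hij, rfl⟩ | ⟨i, j, hij, (rfl | rfl)⟩ | ⟨i, j, hij, rfl⟩)
    · simp [fs, tr_sq]
    · rw [map_commutatorElement]
      simp only [fs, FreeGroup.lift_apply_of, Sum.elim_inl]
      exact commutatorElement_eq_one_iff_commute.mpr (tr_commute hij)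
    · simp [fr, tr_sq]
    · rw [map_commutatorElement]
      simp only [fr, FreeGroup.lift_apply_of, Sum.elim_inr]
      exact commutatorElement_eq_one_iff_commute.mpr (tr_commute hij)
    · have h1 : FreeGroup.lift (Sum.elim tr tr) (fr i * fr j * fr (n := n) i)
          = tr i * tr j * tr i := by simp [fr]
      have h2 : FreeGroup.lift (Sum.elim tr tr) (fr j * fr i * fr (n := n) j)
          = tr j * tr i * tr j := by simp [fr]
      rw [map_mul, map_inv, h1, h2, tr_braid hij, mul_inv_cancel]
    · rw [map_commutatorElement]
      simp only [fr, fs, FreeGroup.lift_apply_of, Sum.elim_inl, Sum.elim_inr]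
      exact commutatorElement_eq_one_iff_commute.mpr (tr_commute hij)
    · rw [map_commutatorElement]
      simp only [fr, fs, FreeGroup.lift_apply_of, Sum.elim_inl, Sum.elim_inr]
      exact commutatorElement_eq_one_iff_commute.mpr (tr_commute hij)
    · have h1 : FreeGroup.lift (Sum.elim tr tr) (fr i * fr j * fs (n := n) i)
          = tr i * tr j * tr i := by simp [fr, fs]
      have h2 : FreeGroup.lift (Sum.elim tr tr) (fs j * fr i * fr (n := n) j)
          = tr j * tr i * tr j := by simp [fr, fs]
      rw [map_mul, map_inv, h1, h2, tr_braid hij, mul_inv_cancel])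


section Aux
open FreeGroup SemidirectProduct

/-! ### The Coxeter presentation of `S₃` -/

private def coxRels : Set (FreeGroup (Fin 2)) :=
  { w | (∃ i : Fin 2, w = FreeGroup.of i * FreeGroup.of i) ∨
        w = FreeGroup.of 0 * FreeGroup.of 1 * FreeGroup.of 0 *
            (FreeGroup.of 1 * FreeGroup.of 0 * FreeGroup.of 1)⁻¹ }

private abbrev S3 := PresentedGroup coxRels

private def τ (i : Fin 2) : S3 := PresentedGroup.of i

private lemma cox_rel_one {w : FreeGroup (Fin 2)} (h : w ∈ coxRels) :
    PresentedGroup.mk coxRels w = 1 :=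
  (QuotientGroup.eq_one_iff _).mpr (Subgroup.subset_normalClosure h)

private lemma τ_sq (i : Fin 2) : τ i * τ i = 1 := by
  have := cox_rel_one (Or.inl ⟨i, rfl⟩)
  rwa [_root_.map_mul] at this

@[simp] private lemma τ_inv (i : Fin 2) : (τ i)⁻¹ = τ i :=
  inv_eq_of_mul_eq_one_right (τ_sq i)

@[simp] private lemma τ_cancel (i : Fin 2) (x : S3) : τ i * (τ i * x) = x := by
  rw [← mul_assoc, τ_sq, one_mul]

@[simp] private lemma τ_sq' (i : Fin 2) : τ i * τ i = 1 := τ_sq i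

private lemma τ_braid : τ 0 * τ 1 * τ 0 = τ 1 * τ 0 * τ 1 := by
  have := cox_rel_one (Or.inr rfl)
  simp only [_root_.map_mul, _root_.map_inv, mul_inv_eq_one] at this
  exact this

@[simp] private lemma τ_braid' (x : S3) :
    τ 0 * (τ 1 * (τ 0 * x)) = τ 1 * (τ 0 * (τ 1 * x)) := by
  simp only [← mul_assoc]
  rw [τ_braid]

/-! ### Normal forms in `S3` -/

private lemma fin2_cases (i : Fin 2) : i = 0 ∨ i = 1 := by
  rcases i with ⟨_ | _ | n, h⟩
  · exact Or.inl rfl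
  · exact Or.inr rfl
  · omega

@[simp] private lemma τ_braid2 : τ 0 * (τ 1 * τ 0) = τ 1 * (τ 0 * τ 1) := by
  simpa [mul_assoc] using τ_braid

private def Eset : Set S3 :=
  {1, τ 0, τ 1, τ 0 * τ 1, τ 1 * τ 0, τ 0 * τ 1 * τ 0}

private lemma mem_Eset_iff (x : S3) : x ∈ Eset ↔
    (x = 1 ∨ x = τ 0 ∨ x = τ 1 ∨ x = τ 0 * τ 1 ∨ x = τ 1 * τ 0 ∨ x = τ 0 * τ 1 * τ 0) := by
  simp [Eset]

private lemma step_mem {i : Fin 2} {x : S3} (hx : x ∈ Eset) : τ i * x ∈ Eset := by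
  rw [mem_Eset_iff] at hx ⊢
  rcases fin2_cases i with rfl | rfl <;>
    rcases hx with rfl | rfl | rfl | rfl | rfl | rfl <;>
    simp [mul_assoc]

private lemma mem_Eset (x : S3) : x ∈ Eset := by
  have hx : x ∈ Subgroup.closure (Set.range (PresentedGroup.of : Fin 2 → S3)) := by
    rw [PresentedGroup.closure_range_of]; trivial
  have key : ∀ y ∈ Eset, x * y ∈ Eset ∧ x⁻¹ * y ∈ Eset := by
    induction hx using Subgroup.closure_induction with
    | mem z hz =>
      obtain ⟨i, rfl⟩ := hz
      intro y hy
      refine ⟨step_mem hy, ?_⟩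
      rw [show (PresentedGroup.of i : S3)⁻¹ = τ i from τ_inv i]
      exact step_mem hy
    | one => intro y hy; simp only [one_mul, inv_one]; exact ⟨hy, hy⟩
    | mul a b _ _ ha hb =>
      intro y hy
      constructor
      · rw [mul_assoc]; exact (ha _ ((hb y hy).1)).1
      · rw [mul_inv_rev, mul_assoc]; exact (hb _ ((ha y hy).2)).2
    | inv a _ ha =>
      intro y hy
      exact ⟨by simpa using (ha y hy).2, by simpa using (ha y hy).1⟩
  simpa using (key 1 (by rw [mem_Eset_iff]; exact Or.inl rfl)).1

/-! ### The projection `S3 → Perm (Fin 3)` -/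

private def trf (i : Fin 2) : Equiv.Perm (Fin 3) := tr (n := 3) ⟨i.1, by omega⟩

private def πS : S3 →* Equiv.Perm (Fin 3) :=
  PresentedGroup.toGroup (f := trf) (by
    rintro w (⟨i, rfl⟩ | rfl)
    · simp only [_root_.map_mul, FreeGroup.lift_apply_of]
      rcases fin2_cases i with rfl | rfl <;> decide
    · simp only [_root_.map_mul, _root_.map_inv, FreeGroup.lift_apply_of, mul_inv_eq_one]
      decide)

@[simp] private lemma πS_τ (i : Fin 2) : πS (τ i) = trf i :=
  PresentedGroup.toGroup.of _

private lemma πS_injective : Function.Injective πS := by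
  rw [injective_iff_map_eq_one]
  intro a ha
  rcases (mem_Eset_iff a).mp (mem_Eset a) with rfl | rfl | rfl | rfl | rfl | rfl
  · rfl
  all_goals (simp only [_root_.map_mul, πS_τ] at ha; exact absurd ha (by decide))

/-! ### The action of `S3` on the free group of rank `3` -/

private lemma fin3_cases (k : Fin 3) : k = 0 ∨ k = 1 ∨ k = 2 := by
  rcases k with ⟨_ | _ | _ | n, h⟩
  · exact Or.inl rfl
  · exact Or.inr (Or.inl rfl)
  · exact Or.inr (Or.inr rfl)
  · omega

private def autFun : Fin 2 → Fin 3 → FreeGroup (Fin 3)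
  | ⟨0, _⟩, ⟨0, _⟩ => FreeGroup.of 1
  | ⟨0, _⟩, ⟨1, _⟩ => FreeGroup.of 0
  | ⟨0, _⟩, ⟨2, _⟩ => (FreeGroup.of 2)⁻¹
  | ⟨1, _⟩, ⟨0, _⟩ => (FreeGroup.of 0)⁻¹
  | ⟨1, _⟩, ⟨1, _⟩ => FreeGroup.of 2
  | ⟨1, _⟩, ⟨2, _⟩ => FreeGroup.of 1

private def authom (i : Fin 2) : FreeGroup (Fin 3) →* FreeGroup (Fin 3) :=
  FreeGroup.lift (autFun i)

@[simp] private lemma authom_of (i : Fin 2) (a : Fin 3) :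
    authom i (FreeGroup.of a) = autFun i a := FreeGroup.lift_apply_of

@[simp] private lemma autFun00 : autFun 0 0 = FreeGroup.of 1 := rfl
@[simp] private lemma autFun01 : autFun 0 1 = FreeGroup.of 0 := rfl
@[simp] private lemma autFun02 : autFun 0 2 = (FreeGroup.of 2)⁻¹ := rfl
@[simp] private lemma autFun10 : autFun 1 0 = (FreeGroup.of 0)⁻¹ := rfl
@[simp] private lemma autFun11 : autFun 1 1 = FreeGroup.of 2 := rfl
@[simp] private lemma autFun12 : autFun 1 2 = FreeGroup.of 1 := rfl

private lemma authom_invol (i : Fin 2) : ∀ x, authom i (authom i x) = x := by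
  have h : (authom i).comp (authom i) = MonoidHom.id _ := by
    apply FreeGroup.ext_hom
    intro a
    rcases fin2_cases i with rfl | rfl <;> rcases fin3_cases a with rfl | rfl | rfl <;>
      simp
  exact fun x => DFunLike.congr_fun h x

private def A (i : Fin 2) : MulAut (FreeGroup (Fin 3)) :=
  { toFun := authom i
    invFun := authom i
    left_inv := authom_invol i
    right_inv := authom_invol i
    map_mul' := _root_.map_mul _ }

@[simp] private lemma A_apply (i : Fin 2) (x : FreeGroup (Fin 3)) : A i x = authom i x := rfl

private lemma mulAut_ext {f g : MulAut (FreeGroup (Fin 3))}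
    (h : ∀ k : Fin 3, f (FreeGroup.of k) = g (FreeGroup.of k)) : f = g :=
  MulEquiv.toMonoidHom_injective (FreeGroup.ext_hom _ _ h)

private def φS : S3 →* MulAut (FreeGroup (Fin 3)) :=
  PresentedGroup.toGroup (f := A) (by
    rintro w (⟨i, rfl⟩ | rfl)
    · simp only [_root_.map_mul, FreeGroup.lift_apply_of]
      apply mulAut_ext
      intro k
      simp only [MulAut.mul_apply, MulAut.one_apply, A_apply, authom_of]
      rcases fin2_cases i with rfl | rfl <;> rcases fin3_cases k with rfl | rfl | rfl <;> simp
    · simp only [_root_.map_mul, _root_.map_inv, FreeGroup.lift_apply_of, mul_inv_eq_one]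
      apply mulAut_ext
      intro k
      simp only [MulAut.mul_apply, A_apply, authom_of]
      rcases fin3_cases k with rfl | rfl | rfl <;> simp)

@[simp] private lemma φS_τ (i : Fin 2) : φS (τ i) = A i :=
  PresentedGroup.toGroup.of _

/-! ### The isomorphism `VT 3 ≃* FreeGroup (Fin 3) ⋊ S3` -/

private def av : Fin 2 → FreeGroup (Fin 3)
  | ⟨0, _⟩ => FreeGroup.of 2
  | ⟨1, _⟩ => FreeGroup.of 0

@[simp] private lemma av0 : av 0 = FreeGroup.of 2 := rfl
@[simp] private lemma av1 : av 1 = FreeGroup.of 0 := rfl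

@[simp] private lemma tau_mk0 (h : (0:ℕ) < 2) : τ ⟨0, h⟩ = τ 0 := rfl
@[simp] private lemma tau_mk1 (h : (1:ℕ) < 2) : τ ⟨1, h⟩ = τ 1 := rfl
@[simp] private lemma av_mk0 (h : (0:ℕ) < 2) : av ⟨0, h⟩ = FreeGroup.of 2 := rfl
@[simp] private lemma av_mk1 (h : (1:ℕ) < 2) : av ⟨1, h⟩ = FreeGroup.of 0 := rfl

private lemma authom_av (i : Fin 2) : authom i (av i) = (av i)⁻¹ := by
  rcases fin2_cases i with rfl | rfl <;> simp

private def fΦ : Gen 3 → FreeGroup (Fin 3) ⋊[φS] S3 :=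
  Sum.elim (fun i => SemidirectProduct.inl (av ⟨i.1, i.2⟩) * SemidirectProduct.inr (τ ⟨i.1, i.2⟩))
    (fun i => SemidirectProduct.inr (τ ⟨i.1, i.2⟩))

private def Φ : VT 3 →* FreeGroup (Fin 3) ⋊[φS] S3 :=
  PresentedGroup.toGroup (f := fΦ) (by
    rintro w (⟨i, rfl⟩ | ⟨i, j, hij, rfl⟩ | ⟨i, rfl⟩ | ⟨i, j, hij, rfl⟩ |
      ⟨i, j, hij, rfl⟩ | ⟨i, j, hij, (rfl | rfl)⟩ | ⟨i, j, hij, rfl⟩)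
    · simp only [fs, _root_.map_mul, FreeGroup.lift_apply_of, fΦ, Sum.elim_inl]
      apply SemidirectProduct.ext <;>
        simp [authom_av]
    · exact absurd hij (by have := j.2; omega)
    · simp only [fr, _root_.map_mul, FreeGroup.lift_apply_of, fΦ, Sum.elim_inr]
      apply SemidirectProduct.ext <;> simp
    · exact absurd hij (by have := j.2; omega)
    · -- ρ braid
      obtain ⟨iv, hiv⟩ := i
      obtain ⟨jv, hjv⟩ := j
      have h1 : jv = iv + 1 := hij
      subst h1
      have h0 : iv = 0 := by omega
      subst h0
      simp only [fr, _root_.map_mul, _root_.map_inv, FreeGroup.lift_apply_of, fΦ, Sum.elim_inr]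
      apply SemidirectProduct.ext <;> simp [mul_assoc]
    · exact absurd hij (by have := j.2; omega)
    · exact absurd hij (by have := j.2; omega)
    · -- mixed braid
      obtain ⟨iv, hiv⟩ := i
      obtain ⟨jv, hjv⟩ := j
      have h1 : jv = iv + 1 := hij
      subst h1
      have h0 : iv = 0 := by omega
      subst h0
      simp only [fr, fs, _root_.map_mul, _root_.map_inv, FreeGroup.lift_apply_of, fΦ,
        Sum.elim_inl, Sum.elim_inr]
      apply SemidirectProduct.ext <;> simp [mul_assoc])

@[simp] private lemma Φ_s (i : Fin (3-1)) :
    Φ (PresentedGroup.of (Sum.inl i)) =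
      SemidirectProduct.inl (av ⟨i.1, i.2⟩) * SemidirectProduct.inr (τ ⟨i.1, i.2⟩) :=
  PresentedGroup.toGroup.of _

@[simp] private lemma Φ_r (i : Fin (3-1)) :
    Φ (PresentedGroup.of (Sum.inr i)) = SemidirectProduct.inr (τ ⟨i.1, i.2⟩) :=
  PresentedGroup.toGroup.of _

/-! ### Relations in `VT 3` -/

private def Sv (i : Fin 2) : VT 3 := PresentedGroup.of (Sum.inl ⟨i.1, by have := i.2; omega⟩)
private def Rv (i : Fin 2) : VT 3 := PresentedGroup.of (Sum.inr ⟨i.1, by have := i.2; omega⟩)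

private lemma vt_rel_one {w : FreeGroup (Gen 3)} (h : w ∈ vtRels 3) :
    PresentedGroup.mk (vtRels 3) w = 1 :=
  (QuotientGroup.eq_one_iff _).mpr (Subgroup.subset_normalClosure h)

@[simp] private lemma Sv_sq (i : Fin 2) : Sv i * Sv i = 1 := by
  have := vt_rel_one (Or.inl ⟨⟨i.1, by have := i.2; omega⟩, rfl⟩)
  rwa [_root_.map_mul] at this

@[simp] private lemma Rv_sq (i : Fin 2) : Rv i * Rv i = 1 := by
  have := vt_rel_one (Or.inr (Or.inr (Or.inl ⟨⟨i.1, by have := i.2; omega⟩, rfl⟩)))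
  rwa [_root_.map_mul] at this

@[simp] private lemma Sv_inv (i : Fin 2) : (Sv i)⁻¹ = Sv i :=
  inv_eq_of_mul_eq_one_right (Sv_sq i)

@[simp] private lemma Rv_inv (i : Fin 2) : (Rv i)⁻¹ = Rv i :=
  inv_eq_of_mul_eq_one_right (Rv_sq i)

@[simp] private lemma Sv_cancel (i : Fin 2) (x : VT 3) : Sv i * (Sv i * x) = x := by
  rw [← mul_assoc, Sv_sq, one_mul]

@[simp] private lemma Rv_cancel (i : Fin 2) (x : VT 3) : Rv i * (Rv i * x) = x := by
  rw [← mul_assoc, Rv_sq, one_mul]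

private lemma Rv_braid : Rv 0 * Rv 1 * Rv 0 = Rv 1 * Rv 0 * Rv 1 := by
  have := vt_rel_one (Or.inr (Or.inr (Or.inr (Or.inr (Or.inl
    ⟨⟨0, by omega⟩, ⟨1, by omega⟩, rfl, rfl⟩)))))
  simp only [_root_.map_mul, _root_.map_inv, mul_inv_eq_one] at this
  exact this

private lemma Rv_mixed : Rv 0 * Rv 1 * Sv 0 = Sv 1 * Rv 0 * Rv 1 := by
  have := vt_rel_one (Or.inr (Or.inr (Or.inr (Or.inr (Or.inr (Or.inr
    ⟨⟨0, by omega⟩, ⟨1, by omega⟩, rfl, rfl⟩))))))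
  simp only [_root_.map_mul, _root_.map_inv, mul_inv_eq_one] at this
  exact this

@[simp] private lemma Rv_braid1 : Rv 1 * (Rv 0 * Rv 1) = Rv 0 * (Rv 1 * Rv 0) := by
  simpa [mul_assoc] using Rv_braid.symm

@[simp] private lemma Rv_braid2 (x : VT 3) :
    Rv 1 * (Rv 0 * (Rv 1 * x)) = Rv 0 * (Rv 1 * (Rv 0 * x)) := by
  simp only [← mul_assoc]
  rw [← Rv_braid]

@[simp] private lemma Sv1_eq : Sv 1 = Rv 0 * (Rv 1 * (Sv 0 * (Rv 1 * Rv 0))) := by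
  have h := congrArg (· * (Rv 1 * Rv 0)) Rv_mixed
  simp only [mul_assoc, Rv_cancel, Rv_sq, mul_one] at h
  exact h.symm

/-! ### The inverse homomorphism -/

private def lam : Fin 3 → VT 3
  | ⟨0, _⟩ => Sv 1 * Rv 1
  | ⟨1, _⟩ => Rv 1 * (Sv 0 * (Rv 0 * Rv 1))
  | ⟨2, _⟩ => Sv 0 * Rv 0

@[simp] private lemma lam0 : lam 0 = Sv 1 * Rv 1 := rfl
@[simp] private lemma lam1 : lam 1 = Rv 1 * (Sv 0 * (Rv 0 * Rv 1)) := rfl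
@[simp] private lemma lam2 : lam 2 = Sv 0 * Rv 0 := rfl

private def f1 : FreeGroup (Fin 3) →* VT 3 := FreeGroup.lift lam

@[simp] private lemma f1_of (a : Fin 3) : f1 (FreeGroup.of a) = lam a := FreeGroup.lift_apply_of

private def f2 : S3 →* VT 3 :=
  PresentedGroup.toGroup (f := Rv) (by
    rintro w (⟨i, rfl⟩ | rfl)
    · simp only [_root_.map_mul, FreeGroup.lift_apply_of, Rv_sq]
    · simp only [_root_.map_mul, _root_.map_inv, FreeGroup.lift_apply_of, mul_inv_eq_one]
      exact Rv_braid)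

@[simp] private lemma f2_of (i : Fin 2) : f2 (PresentedGroup.of i) = Rv i :=
  PresentedGroup.toGroup.of _

@[simp] private lemma f2_τ (i : Fin 2) : f2 (τ i) = Rv i :=
  PresentedGroup.toGroup.of _

@[simp] private lemma φS_of (i : Fin 2) : φS (PresentedGroup.of i) = A i :=
  PresentedGroup.toGroup.of _

private lemma hcompat : ∀ g : S3,
    f1.comp ((φS g).toMonoidHom) = (MulAut.conj (f2 g)).toMonoidHom.comp f1 := by
  intro g
  have hg : g ∈ Subgroup.closure (Set.range (PresentedGroup.of : Fin 2 → S3)) := by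
    rw [PresentedGroup.closure_range_of]; trivial
  induction hg using Subgroup.closure_induction with
  | mem z hz =>
    obtain ⟨i, rfl⟩ := hz
    apply FreeGroup.ext_hom
    intro a
    simp only [MonoidHom.comp_apply, MulEquiv.coe_toMonoidHom, MulAut.conj_apply,
      φS_of, A_apply, authom_of, f2_of, f1_of, Rv_inv]
    rcases fin2_cases i with rfl | rfl <;> rcases fin3_cases a with rfl | rfl | rfl <;>
      simp [mul_assoc]
  | one =>
    apply FreeGroup.ext_hom
    intro a
    simp
  | mul a b _ _ ha hb =>
    have ha' := fun x => DFunLike.congr_fun ha x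
    have hb' := fun x => DFunLike.congr_fun hb x
    simp only [MonoidHom.comp_apply, MulEquiv.coe_toMonoidHom, MulAut.conj_apply] at ha' hb'
    refine DFunLike.ext _ _ fun x => ?_
    simp only [MonoidHom.comp_apply, MulEquiv.coe_toMonoidHom, MulAut.conj_apply,
      _root_.map_mul, MulAut.mul_apply]
    rw [ha', hb']
    simp [mul_assoc]
  | inv a _ ha =>
    have ha' := fun x => DFunLike.congr_fun ha x
    simp only [MonoidHom.comp_apply, MulEquiv.coe_toMonoidHom, MulAut.conj_apply] at ha'
    refine DFunLike.ext _ _ fun x => ?_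
    simp only [MonoidHom.comp_apply, MulEquiv.coe_toMonoidHom, MulAut.conj_apply]
    have h3 := ha' (φS a⁻¹ x)
    have h4 : φS a (φS a⁻¹ x) = x := by
      rw [_root_.map_inv, ← MulAut.mul_apply, mul_inv_cancel, MulAut.one_apply]
    rw [h4] at h3
    simp only [_root_.map_inv, inv_inv] at h3 ⊢
    rw [h3]
    simp [mul_assoc]

private def Ψ : FreeGroup (Fin 3) ⋊[φS] S3 →* VT 3 :=
  SemidirectProduct.lift f1 f2 hcompat

/-! ### The two compositions are the identity -/

@[simp] private lemma Sv0_def (h : (0:ℕ) < 3 - 1) :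
    (PresentedGroup.of (Sum.inl ⟨0, h⟩) : VT 3) = Sv 0 := rfl
@[simp] private lemma Sv1_def (h : (1:ℕ) < 3 - 1) :
    (PresentedGroup.of (Sum.inl ⟨1, h⟩) : VT 3) = Sv 1 := rfl
@[simp] private lemma Rv0_def (h : (0:ℕ) < 3 - 1) :
    (PresentedGroup.of (Sum.inr ⟨0, h⟩) : VT 3) = Rv 0 := rfl
@[simp] private lemma Rv1_def (h : (1:ℕ) < 3 - 1) :
    (PresentedGroup.of (Sum.inr ⟨1, h⟩) : VT 3) = Rv 1 := rfl

@[simp] private lemma Φ_Sv (i : Fin 2) :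
    Φ (Sv i) = SemidirectProduct.inl (av i) * SemidirectProduct.inr (τ i) :=
  PresentedGroup.toGroup.of _

@[simp] private lemma Φ_Rv (i : Fin 2) : Φ (Rv i) = SemidirectProduct.inr (τ i) :=
  PresentedGroup.toGroup.of _

private lemma ΨΦ_id : Ψ.comp Φ = MonoidHom.id (VT 3) := by
  apply PresentedGroup.ext
  rintro (⟨iv, hiv⟩ | ⟨iv, hiv⟩) <;>
  · have h : iv = 0 ∨ iv = 1 := by omega
    rcases h with rfl | rfl
    · simp only [MonoidHom.comp_apply, MonoidHom.id_apply, Φ_s, Φ_r, av_mk0, tau_mk0]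
      first
      | (show Ψ (SemidirectProduct.inl (FreeGroup.of 2) * SemidirectProduct.inr (τ 0)) = Sv 0
         simp [Ψ, mul_assoc])
      | (show Ψ (SemidirectProduct.inr (τ 0)) = Rv 0
         simp [Ψ])
    · simp only [MonoidHom.comp_apply, MonoidHom.id_apply, Φ_s, Φ_r, av_mk1, tau_mk1]
      first
      | (show Ψ (SemidirectProduct.inl (FreeGroup.of 0) * SemidirectProduct.inr (τ 1)) = Sv 1
         simp [Ψ, mul_assoc])
      | (show Ψ (SemidirectProduct.inr (τ 1)) = Rv 1
         simp [Ψ])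

private lemma ΦΨ_id : Φ.comp Ψ = MonoidHom.id (FreeGroup (Fin 3) ⋊[φS] S3) := by
  apply SemidirectProduct.hom_ext
  · rw [MonoidHom.comp_assoc, Ψ, SemidirectProduct.lift_comp_inl, MonoidHom.id_comp]
    apply FreeGroup.ext_hom
    intro a
    simp only [MonoidHom.comp_apply, f1_of]
    rcases fin3_cases a with rfl | rfl | rfl <;>
    · simp only [lam0, lam1, lam2, _root_.map_mul, Φ_Sv, Φ_Rv]
      apply SemidirectProduct.ext <;> simp [mul_assoc]
  · rw [MonoidHom.comp_assoc, Ψ, SemidirectProduct.lift_comp_inr, MonoidHom.id_comp]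
    apply PresentedGroup.ext
    intro i
    simp only [MonoidHom.comp_apply, MonoidHom.id_comp, f2_of, Φ_Rv]
    rfl

private def eVT : VT 3 ≃* FreeGroup (Fin 3) ⋊[φS] S3 :=
  { toFun := Φ
    invFun := Ψ
    left_inv := fun x => DFunLike.congr_fun ΨΦ_id x
    right_inv := fun x => DFunLike.congr_fun ΦΨ_id x
    map_mul' := _root_.map_mul Φ }

/-! ### Identification of the kernels -/

private lemma perm_eq : (πS.comp SemidirectProduct.rightHom).comp Φ = perm 3 := by
  apply PresentedGroup.ext
  rintro (i | i) <;>
  · simp only [MonoidHom.comp_apply, Φ_s, Φ_r, _root_.map_mul,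
      SemidirectProduct.rightHom_inl, SemidirectProduct.rightHom_inr, one_mul, πS_τ,
      _root_.map_one, perm, PresentedGroup.toGroup.of, Sum.elim_inl, Sum.elim_inr]
    rfl

end Aux

/-- The pure virtual twin group `PVT_3` is a free group of rank `3`. -/
theorem pvt3_free : Nonempty ((perm 3).ker ≃* FreeGroup (Fin 3)) := by
  have h2 : (πS.comp ((SemidirectProduct.rightHom : FreeGroup (Fin 3) ⋊[φS] S3 →* S3))).ker = (SemidirectProduct.rightHom : FreeGroup (Fin 3) ⋊[φS] S3 →* S3).ker := by
    rw [← MonoidHom.comap_ker, (MonoidHom.ker_eq_bot_iff πS).mpr πS_injective,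
      MonoidHom.comap_bot]
  have hker : (perm 3).ker =
      Subgroup.comap (eVT : VT 3 →* FreeGroup (Fin 3) ⋊[φS] S3)
        (SemidirectProduct.rightHom : FreeGroup (Fin 3) ⋊[φS] S3 →* S3).ker := by
    calc (perm 3).ker
        = ((πS.comp (SemidirectProduct.rightHom : FreeGroup (Fin 3) ⋊[φS] S3 →* S3)).comp Φ).ker := by rw [perm_eq]
      _ = Subgroup.comap Φ (πS.comp (SemidirectProduct.rightHom : FreeGroup (Fin 3) ⋊[φS] S3 →* S3)).ker :=
          (MonoidHom.comap_ker _ _).symm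
      _ = Subgroup.comap Φ (SemidirectProduct.rightHom : FreeGroup (Fin 3) ⋊[φS] S3 →* S3).ker := by rw [h2]
      _ = _ := Subgroup.ext fun x => Iff.rfl
  have hmap : Subgroup.map (eVT : VT 3 →* FreeGroup (Fin 3) ⋊[φS] S3) (perm 3).ker =
      (SemidirectProduct.rightHom : FreeGroup (Fin 3) ⋊[φS] S3 →* S3).ker := by
    rw [hker]
    exact Subgroup.map_comap_eq_self_of_surjective eVT.surjective _
  exact ⟨((eVT.subgroupMap (perm 3).ker).trans (MulEquiv.subgroupCongr hmap)).trans
    ((MonoidHom.ofInjective SemidirectProduct.inl_injective).trans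
      (MulEquiv.subgroupCongr (SemidirectProduct.range_inl_eq_ker_rightHom (φ := φS)))).symm⟩


end VTG
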